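/- With κ, M, D as above, let f* ∈ M ∩ κ^κ be such that [f*]_D is a least upper bound of the classes of constant functions {[c_α]_D : α < κ}. Then for every club C ⊆ κ with C ∈ M, the preimage f*^{-1}(C) belongs to D. -/

import Mathlib

open Cardinal

/-- A club in `κ` (as a subset of a type of order type `κ.ord`): unbounded and closed
under suprema of its nonempty subsets. -/
def IsClubSet {K : Type*} [LinearOrder K] (C : Set K) : Prop :=
  (∀ a : K, ∃ b ∈ C, a < b) ∧
  (∀ s : Set K, s ⊆ C → s.Nonempty → ∀ a : K, IsLUB s a → a ∈ C)

/-- with `κ`, `M` (traces `MS`, `MF`), `A*`, `D = {x : A* ⊆* x}` as before,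
let `f* ∈ M ∩ κ^κ` represent a least upper bound of the classes of the constant
functions.  Then for every club `C ⊆ κ` with `C ∈ M`, `f*⁻¹(C) ∈ D`.  (Membership
`C ∈ M` is modelled by the two instances of elementarity it provides: `f*⁻¹(C) ∈ MS`,
and `M` contains a function computing `sup(C ∩ f*(α))`.) -/
theorem stmt_7 (κ : Cardinal) (hreg : κ.IsRegular) (hκ : ℵ₀ < κ)
    (MS : Set (Set κ.ord.ToType)) (MF : Set (κ.ord.ToType → κ.ord.ToType))
    (hcmp : ∀ f ∈ MF, ∀ g ∈ MF,
      {α | f α = g α} ∈ MS ∧ {α | f α < g α} ∈ MS)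
    (hconst : ∀ a : κ.ord.ToType, (fun _ => a) ∈ MF)
    (hid : id ∈ MF)
    (A : Set κ.ord.ToType) (hA : #↥A = κ)
    (hunsplit : ∀ x ∈ MS, #↥(A \ x) < κ ∨ #↥(A ∩ x) < κ)
    -- `f* ∈ M ∩ κ^κ` is a least upper bound of the constant functions modulo `D`
    (fs : κ.ord.ToType → κ.ord.ToType) (hfs : fs ∈ MF)
    (hub : ∀ a : κ.ord.ToType, #↥(A \ {β | a < fs β}) < κ)
    (hlub : ∀ g ∈ MF, (∀ a : κ.ord.ToType, #↥(A \ {β | a < g β}) < κ) →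
      ¬ #↥(A \ {β | g β < fs β}) < κ)
    -- `C ∈ M` is a club in `κ`
    (C : Set κ.ord.ToType) (hC : IsClubSet C)
    (hCM : {α | fs α ∈ C} ∈ MS)
    (hsup : ∃ g ∈ MF, ∀ α : κ.ord.ToType,
      (C ∩ Set.Iio (fs α)).Nonempty → IsLUB (C ∩ Set.Iio (fs α)) (g α)) :
    #↥(A \ {α | fs α ∈ C}) < κ := by

  rcases hunsplit _ hCM with h | h
  · exact h
  · exfalso
    obtain ⟨g, hg, hgsup⟩ := hsup
    -- an element of the type
    have hAne : Nonempty ↥A := by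
      rw [← Cardinal.mk_ne_zero_iff, hA]
      exact (Cardinal.aleph0_pos.trans hκ).ne'
    obtain ⟨⟨a0, _⟩⟩ := hAne
    obtain ⟨c0, hc0C, _⟩ := hC.1 a0
    -- g is an upper bound of the constants mod D
    have hgub : ∀ a : κ.ord.ToType, #↥(A \ {β | a < g β}) < κ := by
      intro a
      obtain ⟨c, hcC, hac⟩ := hC.1 a
      have hsub : A \ {β | a < g β} ⊆ A \ {β | c < fs β} := by
        rintro β ⟨hβA, hβ⟩
        refine ⟨hβA, fun hcfs => hβ ?_⟩
        have hne : (C ∩ Set.Iio (fs β)).Nonempty := ⟨c, hcC, hcfs⟩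
        have := (hgsup β hne).1 ⟨hcC, hcfs⟩
        exact lt_of_lt_of_le hac this
      exact lt_of_le_of_lt (Cardinal.mk_le_mk_of_subset hsub) (hub c)
    refine hlub g hg hgub ?_
    have hsub : A \ {β | g β < fs β} ⊆
        (A \ {β | c0 < fs β}) ∪ (A ∩ {α | fs α ∈ C}) := by
      rintro β ⟨hβA, hβ⟩
      by_cases h1 : c0 < fs β
      · by_cases h2 : fs β ∈ C
        · exact Or.inr ⟨hβA, h2⟩
        · exfalso
          have hne : (C ∩ Set.Iio (fs β)).Nonempty := ⟨c0, hc0C, h1⟩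
          have hl := hgsup β hne
          have hle : g β ≤ fs β := hl.2 (fun x hx => le_of_lt hx.2)
          have hmem : g β ∈ C := hC.2 _ Set.inter_subset_left hne _ hl
          have : g β ≠ fs β := fun he => h2 (he ▸ hmem)
          exact hβ (lt_of_le_of_ne hle this)
      · exact Or.inl ⟨hβA, h1⟩
    refine lt_of_le_of_lt (Cardinal.mk_le_mk_of_subset hsub) ?_
    exact lt_of_le_of_lt (Cardinal.mk_union_le _ _)
      (Cardinal.add_lt_of_lt hreg.aleph0_le (hub c0) h)
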